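/- arXiv:1411.7246 — 2 statements merged into one kernel-verified Lean document; each statement's English description precedes it below -/
import Mathlib

section
/- Let α ∈ ℝ and β ≥ 0. There exists a constant C > 0 such that for all n ≥ 2, (∏_{k=2}^{n} k^{-α} (log k)^{β})^{1/n} ≤ C · n^{-α} (log n)^{β}. -/
lemma aux_log_sum_lower (n : ℕ) (hn : 2 ≤ n) :
    (n : ℝ) * Real.log n - n ≤ ∑ k ∈ Finset.Icc 2 n, Real.log k := by
  induction n, hn using Nat.le_induction with
  | base =>
    simp only [Finset.Icc_self, Finset.sum_singleton]
    have := Real.log_le_sub_one_of_pos (x := 2) (by norm_num)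
    push_cast
    nlinarith [Real.log_nonneg (by norm_num : (1:ℝ) ≤ 2)]
  | succ n hn ih =>
    rw [Finset.sum_Icc_succ_top (by omega : 2 ≤ n + 1)]
    have hn0 : (0:ℝ) < n := by positivity
    have hn1 : (0:ℝ) < (n:ℝ) + 1 := by linarith
    have h1 : Real.log (((n:ℝ)+1)/n) ≤ ((n:ℝ)+1)/n - 1 :=
      Real.log_le_sub_one_of_pos (by positivity)
    rw [Real.log_div (by positivity) (by positivity)] at h1
    have h2 : ((n:ℝ)+1)/n - 1 = 1/n := by field_simp; ring
    rw [h2] at h1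
    have h3 : (n:ℝ) * (Real.log ((n:ℝ)+1) - Real.log n) ≤ 1 := by
      calc (n:ℝ) * (Real.log ((n:ℝ)+1) - Real.log n) ≤ (n:ℝ) * (1/n) := by
            exact mul_le_mul_of_nonneg_left h1 (le_of_lt hn0)
        _ = 1 := by field_simp
    push_cast
    nlinarith [ih]

lemma aux_log_sum_upper (n : ℕ) (hn : 2 ≤ n) :
    ∑ k ∈ Finset.Icc 2 n, Real.log k ≤ (n : ℝ) * Real.log n := by
  have h1 : ∑ k ∈ Finset.Icc 2 n, Real.log k ≤ ∑ k ∈ Finset.Icc 2 n, Real.log n := by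
    refine Finset.sum_le_sum fun k hk => ?_
    obtain ⟨hk2, hkn⟩ := Finset.mem_Icc.mp hk
    have hk0 : (0:ℝ) < k := by exact_mod_cast Nat.lt_of_lt_of_le Nat.zero_lt_two hk2
    exact Real.log_le_log hk0 (by exact_mod_cast hkn)
  rw [Finset.sum_const, Nat.card_Icc, nsmul_eq_mul] at h1
  have h3 : 0 ≤ Real.log n := Real.log_nonneg (by exact_mod_cast Nat.one_le_of_lt hn)
  have h4 : ((n + 1 - 2 : ℕ) : ℝ) ≤ (n : ℝ) := by
    exact_mod_cast Nat.cast_le.mpr (show n + 1 - 2 ≤ n by omega)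
  calc ∑ k ∈ Finset.Icc 2 n, Real.log k ≤ ((n+1-2:ℕ):ℝ) * Real.log n := h1
    _ ≤ (n:ℝ) * Real.log n := mul_le_mul_of_nonneg_right h4 h3

/-- Geometric mean bound: (∏_{k=2}^n k^{-α}(log k)^β)^{1/n} ≤ C n^{-α}(log n)^β. -/
theorem stmt_1 (α β : ℝ) (hβ : 0 ≤ β) :
    ∃ C > (0 : ℝ), ∀ n : ℕ, 2 ≤ n →
      (∏ k ∈ Finset.Icc 2 n, ((k : ℝ) ^ (-α) * Real.log k ^ β)) ^ ((n : ℝ)⁻¹)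
        ≤ C * ((n : ℝ) ^ (-α) * Real.log n ^ β) := by
  set M : ℝ := max |α| (-(-α * Real.log 2 + β * Real.log (Real.log 2)) / 2) with hM
  refine ⟨Real.exp M, Real.exp_pos _, fun n hn => ?_⟩
  have hn0 : (0:ℝ) < n := by positivity
  have hlogn : (0:ℝ) < Real.log n := Real.log_pos (by exact_mod_cast hn)
  have hfpos : ∀ k : ℕ, k ∈ Finset.Icc 2 n → 0 < (k : ℝ) ^ (-α) * Real.log k ^ β := by
    intro k hk
    have hk2 : 2 ≤ k := (Finset.mem_Icc.mp hk).1
    have hk0 : (0:ℝ) < k := by positivity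
    have hlk : (0:ℝ) < Real.log k := Real.log_pos (by exact_mod_cast hk2)
    positivity
  have hP : 0 < ∏ k ∈ Finset.Icc 2 n, ((k : ℝ) ^ (-α) * Real.log k ^ β) :=
    Finset.prod_pos hfpos
  have hfn : 0 < (n : ℝ) ^ (-α) * Real.log n ^ β := by positivity
  rw [← Real.log_le_log_iff (Real.rpow_pos_of_pos hP _) (by positivity),
    Real.log_rpow hP, Real.log_mul (Real.exp_ne_zero _) (ne_of_gt hfn), Real.log_exp,
    Real.log_prod (fun k hk => ne_of_gt (hfpos k hk))]
  have hterm : ∀ k : ℕ, k ∈ Finset.Icc 2 n →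
      Real.log ((k : ℝ) ^ (-α) * Real.log k ^ β)
        = -α * Real.log k + β * Real.log (Real.log k) := by
    intro k hk
    have hk2 : 2 ≤ k := (Finset.mem_Icc.mp hk).1
    have hk0 : (0:ℝ) < k := by positivity
    have hlk : (0:ℝ) < Real.log k := Real.log_pos (by exact_mod_cast hk2)
    rw [Real.log_mul (by positivity) (by positivity), Real.log_rpow hk0,
      Real.log_rpow hlk]
  rw [Finset.sum_congr rfl hterm]
  have hfneq : Real.log ((n : ℝ) ^ (-α) * Real.log n ^ β)
      = -α * Real.log n + β * Real.log (Real.log n) := by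
    rw [Real.log_mul (by positivity) (by positivity), Real.log_rpow hn0,
      Real.log_rpow hlogn]
  rw [hfneq]
  -- Now goal: n⁻¹ * ∑ (-α log k + β log log k) ≤ M + (-α log n + β log log n)
  rcases eq_or_lt_of_le hn with h2 | h3
  · -- n = 2
    subst h2
    simp only [Finset.Icc_self, Finset.sum_singleton]
    have hM2 : -(-α * Real.log 2 + β * Real.log (Real.log 2)) / 2 ≤ M := le_max_right _ _
    push_cast
    norm_num
    linarith
  · -- n ≥ 3
    have hn3 : 3 ≤ n := h3
    have hlog3 : (1:ℝ) ≤ Real.log 3 := by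
      rw [Real.le_log_iff_exp_le (by norm_num)]
      calc Real.exp 1 ≤ 2.7182818286 := le_of_lt Real.exp_one_lt_d9
        _ ≤ 3 := by norm_num
    have hlogn1 : (1:ℝ) ≤ Real.log n := by
      calc (1:ℝ) ≤ Real.log 3 := hlog3
        _ ≤ Real.log n := Real.log_le_log (by norm_num) (by exact_mod_cast hn3)
    have hloglogn : 0 ≤ Real.log (Real.log n) := Real.log_nonneg hlogn1
    rw [Finset.sum_add_distrib, ← Finset.mul_sum, ← Finset.mul_sum]
    set S1 := ∑ k ∈ Finset.Icc 2 n, Real.log k with hS1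
    set S2 := ∑ k ∈ Finset.Icc 2 n, Real.log (Real.log k) with hS2
    have hS1l : (n:ℝ) * Real.log n - n ≤ S1 := aux_log_sum_lower n hn
    have hS1u : S1 ≤ (n:ℝ) * Real.log n := aux_log_sum_upper n hn
    have hbound1 : -α * S1 ≤ (n:ℝ) * (-α * Real.log n) + |α| * n := by
      rcases le_or_gt 0 α with hα | hα
      · have : -α * S1 ≤ -α * ((n:ℝ) * Real.log n - n) := by
          apply mul_le_mul_of_nonpos_left hS1l (by linarith)
        rw [abs_of_nonneg hα]; nlinarith
      · have : -α * S1 ≤ -α * ((n:ℝ) * Real.log n) := by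
          apply mul_le_mul_of_nonneg_left hS1u (by linarith)
        rw [abs_of_neg hα]; nlinarith
    have hbound2 : S2 ≤ (n:ℝ) * Real.log (Real.log n) := by
      have h1 : S2 ≤ ∑ _k ∈ Finset.Icc 2 n, Real.log (Real.log n) := by
        refine Finset.sum_le_sum fun k hk => ?_
        obtain ⟨hk2, hkn⟩ := Finset.mem_Icc.mp hk
        have hlk : (0:ℝ) < Real.log k := Real.log_pos (by exact_mod_cast hk2)
        exact Real.log_le_log hlk (Real.log_le_log (by positivity) (by exact_mod_cast hkn))
      rw [Finset.sum_const, Nat.card_Icc, nsmul_eq_mul] at h1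
      have h4 : ((n + 1 - 2 : ℕ) : ℝ) ≤ (n : ℝ) := by
        exact_mod_cast Nat.cast_le.mpr (show n + 1 - 2 ≤ n by omega)
      calc S2 ≤ ((n+1-2:ℕ):ℝ) * Real.log (Real.log n) := h1
        _ ≤ (n:ℝ) * Real.log (Real.log n) := mul_le_mul_of_nonneg_right h4 hloglogn
    have hbound2' : β * S2 ≤ (n:ℝ) * (β * Real.log (Real.log n)) := by
      calc β * S2 ≤ β * ((n:ℝ) * Real.log (Real.log n)) := mul_le_mul_of_nonneg_left hbound2 hβ
        _ = (n:ℝ) * (β * Real.log (Real.log n)) := by ring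
    have hMα : |α| ≤ M := le_max_left _ _
    have key : -α * S1 + β * S2 ≤ (n:ℝ) * (M + (-α * Real.log n + β * Real.log (Real.log n))) := by
      have : |α| * (n:ℝ) ≤ M * n := mul_le_mul_of_nonneg_right hMα (le_of_lt hn0)
      nlinarith
    calc (n:ℝ)⁻¹ * (-α * S1 + β * S2)
        ≤ (n:ℝ)⁻¹ * ((n:ℝ) * (M + (-α * Real.log n + β * Real.log (Real.log n)))) := by
          apply mul_le_mul_of_nonneg_left key (by positivity)
      _ = M + (-α * Real.log n + β * Real.log (Real.log n)) := by field_simp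
end

section
/- Let X and Y be normed spaces of the same finite dimension m, and let T : X → Y be an invertible bounded linear operator. Then for every n with 1 ≤ n ≤ m, b_n(T) · c_{m−n+1}(T^{−1}) = 1. -/
open Module Submodule

/-- The `n`-th Bernstein number of a continuous linear operator:
`b_n(T) = sup over n-dimensional subspaces L of inf_{x ∈ L, x ≠ 0} ‖Tx‖/‖x‖`. -/
noncomputable def bernsteinNumber {X Y : Type*} [NormedAddCommGroup X] [NormedSpace ℝ X]
    [NormedAddCommGroup Y] [NormedSpace ℝ Y] (T : X →L[ℝ] Y) (n : ℕ) : ℝ :=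
  ⨆ L : {L : Submodule ℝ X // Module.finrank ℝ L = n},
    ⨅ x : {v : X // v ∈ L.1 ∧ v ≠ 0}, ‖T x.1‖ / ‖x.1‖

/-- The `n`-th Gelfand number:
`c_n(T) = inf { ‖T|_M‖ : M closed subspace of X with codim(M) < n }`. -/
noncomputable def gelfandNumber {X Y : Type*} [NormedAddCommGroup X] [NormedSpace ℝ X]
    [NormedAddCommGroup Y] [NormedSpace ℝ Y] (T : X →L[ℝ] Y) (n : ℕ) : ℝ :=
  sInf {r : ℝ | ∃ M : Submodule ℝ X, IsClosed (M : Set X) ∧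
    Module.finrank ℝ (X ⧸ M) < n ∧ r = ‖T.comp M.subtypeL‖}

/-- Any subspace of dimension at least `n` contains a subspace of dimension exactly `n`. -/
lemma exists_sub_of_le_finrank {K V : Type*} [DivisionRing K] [AddCommGroup V] [Module K V]
    (N : Submodule K V) {n : ℕ} (h : n ≤ Module.finrank K N) :
    ∃ L : Submodule K V, L ≤ N ∧ Module.finrank K L = n := by
  obtain ⟨f, hf⟩ := exists_linearIndependent_of_le_finrank h
  have hg : LinearIndependent K (fun i : Fin n => ((f i : N) : V)) :=
    hf.map' N.subtype N.ker_subtype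
  refine ⟨Submodule.span K (Set.range fun i : Fin n => ((f i : N) : V)), ?_, ?_⟩
  · rw [Submodule.span_le]
    rintro _ ⟨i, rfl⟩
    exact (f i).2
  · rw [finrank_span_eq_card hg, Fintype.card_fin]

/-- A subspace of positive dimension contains a nonzero vector. -/
lemma exists_mem_ne_zero_of_one_le_finrank {K V : Type*} [DivisionRing K] [AddCommGroup V]
    [Module K V] (N : Submodule K V) (h : 1 ≤ Module.finrank K N) :
    ∃ v ∈ N, v ≠ 0 := by
  by_contra hc
  push_neg at hc
  have hbot : N = ⊥ := (Submodule.eq_bot_iff N).mpr hc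
  rw [hbot, finrank_bot] at h
  omega

set_option maxHeartbeats 1000000 in
set_option synthInstance.maxHeartbeats 400000 in
/-- If dim X = dim Y = m and T : X → Y is invertible, then
b_n(T) · c_{m−n+1}(T⁻¹) = 1 for 1 ≤ n ≤ m. -/
theorem stmt_8 {X Y : Type*} [NormedAddCommGroup X] [NormedSpace ℝ X]
    [NormedAddCommGroup Y] [NormedSpace ℝ Y] (m : ℕ)
    (hX : Module.finrank ℝ X = m) (hY : Module.finrank ℝ Y = m)
    (e : X ≃L[ℝ] Y) (n : ℕ) (h1 : 1 ≤ n) (h2 : n ≤ m) :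
    bernsteinNumber (e : X →L[ℝ] Y) n *
      gelfandNumber (e.symm : Y →L[ℝ] X) (m - n + 1) = 1 := by
  classical
  have hm : 1 ≤ m := h1.trans h2
  haveI : FiniteDimensional ℝ X := FiniteDimensional.of_finrank_pos (by omega)
  haveI : FiniteDimensional ℝ Y := FiniteDimensional.of_finrank_pos (by omega)
  haveI : Nontrivial X := Module.nontrivial_of_finrank_pos (R := ℝ) (by omega)
  haveI : Nontrivial Y := Module.nontrivial_of_finrank_pos (R := ℝ) (by omega)
  set T : X →L[ℝ] Y := (e : X →L[ℝ] Y) with hTdef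
  set S : Y →L[ℝ] X := (e.symm : Y →L[ℝ] X) with hSdef
  have hST : ∀ x : X, S (T x) = x := fun x => by
    simp only [hTdef, hSdef, ContinuousLinearEquiv.coe_coe]
    exact e.symm_apply_apply x
  have hTS : ∀ y : Y, T (S y) = y := fun y => by
    simp only [hTdef, hSdef, ContinuousLinearEquiv.coe_coe]
    exact e.apply_symm_apply y
  obtain ⟨x₀, hx₀⟩ := exists_ne (0 : X)
  obtain ⟨y₀, hy₀⟩ := exists_ne (0 : Y)
  have hS0 : 0 < ‖S‖ := by
    have h1' : ‖x₀‖ ≤ ‖S‖ * ‖T x₀‖ := by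
      calc ‖x₀‖ = ‖S (T x₀)‖ := by rw [hST]
        _ ≤ ‖S‖ * ‖T x₀‖ := S.le_opNorm _
    nlinarith [norm_pos_iff.mpr hx₀, norm_nonneg (T x₀), norm_nonneg S]
  have hT0 : 0 < ‖T‖ := by
    have h1' : ‖y₀‖ ≤ ‖T‖ * ‖S y₀‖ := by
      calc ‖y₀‖ = ‖T (S y₀)‖ := by rw [hTS]
        _ ≤ ‖T‖ * ‖S y₀‖ := T.le_opNorm _
    nlinarith [norm_pos_iff.mpr hy₀, norm_nonneg (S y₀), norm_nonneg T]
  -- the inner infimum in the Bernstein number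
  set iL : Submodule ℝ X → ℝ :=
    fun L => ⨅ x : {v : X // v ∈ L ∧ v ≠ 0}, ‖T x.1‖ / ‖x.1‖ with hiLdef
  have hb_def : bernsteinNumber T n
      = ⨆ L : {L : Submodule ℝ X // finrank ℝ L = n}, iL L.1 := by
    rw [hiLdef]; rfl
  have hiL_nonneg : ∀ L, 0 ≤ iL L := fun L =>
    Real.iInf_nonneg fun x => div_nonneg (norm_nonneg _) (norm_nonneg _)
  have hiL_bddBelow : ∀ L : Submodule ℝ X,
      BddBelow (Set.range fun x : {v : X // v ∈ L ∧ v ≠ 0} => ‖T x.1‖ / ‖x.1‖) := by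
    intro L
    refine ⟨0, ?_⟩
    rintro _ ⟨x, rfl⟩
    exact div_nonneg (norm_nonneg _) (norm_nonneg _)
  have hiL_lower : ∀ L : Submodule ℝ X,
      Nonempty {v : X // v ∈ L ∧ v ≠ 0} → ‖S‖⁻¹ ≤ iL L := by
    intro L hne
    refine le_ciInf fun x => ?_
    have hx : (0:ℝ) < ‖x.1‖ := norm_pos_iff.mpr x.2.2
    rw [le_div_iff₀ hx, inv_mul_le_iff₀ hS0]
    calc ‖x.1‖ = ‖S (T x.1)‖ := by rw [hST]
      _ ≤ ‖S‖ * ‖T x.1‖ := S.le_opNorm _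
  have hiL_le_opNorm : ∀ L : Submodule ℝ X, iL L ≤ ‖T‖ := by
    intro L
    rcases isEmpty_or_nonempty {v : X // v ∈ L ∧ v ≠ 0} with h | h
    · have h0 : iL L = 0 := Real.iInf_of_isEmpty _
      rw [h0]; exact norm_nonneg T
    · obtain ⟨x⟩ := h
      refine (ciInf_le (hiL_bddBelow L) x).trans ?_
      rw [div_le_iff₀ (norm_pos_iff.mpr x.2.2)]
      exact T.le_opNorm _
  have hbdd : BddAbove
      (Set.range fun L : {L : Submodule ℝ X // finrank ℝ L = n} => iL L.1) := by
    refine ⟨‖T‖, ?_⟩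
    rintro _ ⟨L, rfl⟩
    exact hiL_le_opNorm L.1
  obtain ⟨L₀, -, hL₀⟩ := exists_sub_of_le_finrank (⊤ : Submodule ℝ X) (n := n)
    (by rw [finrank_top, hX]; exact h2)
  haveI hne_idx : Nonempty {L : Submodule ℝ X // finrank ℝ L = n} := ⟨⟨L₀, hL₀⟩⟩
  -- the Gelfand set
  set G : Set ℝ := {r : ℝ | ∃ M : Submodule ℝ Y, IsClosed (M : Set Y) ∧
      finrank ℝ (Y ⧸ M) < m - n + 1 ∧ r = ‖S.comp M.subtypeL‖} with hGdef
  have hc_def : gelfandNumber S (m - n + 1) = sInf G := by rw [hGdef]; rfl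
  have hG_ne : G.Nonempty := by
    refine ⟨‖S.comp (⊤ : Submodule ℝ Y).subtypeL‖, ⊤, ?_, ?_, rfl⟩
    · rw [Submodule.top_coe]; exact isClosed_univ
    · have hq := Submodule.finrank_quotient_add_finrank (⊤ : Submodule ℝ Y)
      rw [finrank_top, hY] at hq
      omega
  have hG_bdd : BddBelow G := by
    refine ⟨0, ?_⟩
    rintro r ⟨M, -, -, rfl⟩
    exact norm_nonneg (S.comp M.subtypeL)
  -- lower bound for the Gelfand number
  have hc_lb : ‖T‖⁻¹ ≤ sInf G := by
    refine le_csInf hG_ne ?_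
    rintro r ⟨M, -, hq, rfl⟩
    have h3 := Submodule.finrank_quotient_add_finrank M
    rw [hY] at h3
    obtain ⟨y, hyM, hy0⟩ := exists_mem_ne_zero_of_one_le_finrank M (by omega)
    have hy : (0:ℝ) < ‖y‖ := norm_pos_iff.mpr hy0
    have h4 : ‖S y‖ ≤ ‖S.comp M.subtypeL‖ * ‖y‖ := (S.comp M.subtypeL).le_opNorm ⟨y, hyM⟩
    have h5 : ‖y‖ ≤ ‖T‖ * ‖S y‖ := by
      calc ‖y‖ = ‖T (S y)‖ := by rw [hTS]
        _ ≤ ‖T‖ * ‖S y‖ := T.le_opNorm _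
    have h6 : 1 ≤ ‖T‖ * ‖S.comp M.subtypeL‖ := by
      have h7 : 1 * ‖y‖ ≤ (‖T‖ * ‖S.comp M.subtypeL‖) * ‖y‖ := by nlinarith
      exact le_of_mul_le_mul_right (by linarith) hy
    calc ‖T‖⁻¹ = ‖T‖⁻¹ * 1 := (mul_one _).symm
      _ ≤ ‖T‖⁻¹ * (‖T‖ * ‖S.comp M.subtypeL‖) :=
          mul_le_mul_of_nonneg_left h6 (inv_nonneg.mpr hT0.le)
      _ = ‖S.comp M.subtypeL‖ := by field_simp
  have hc0 : 0 < sInf G := lt_of_lt_of_le (inv_pos.mpr hT0) hc_lb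
  -- lower bound for the Bernstein number
  have hb_lb : ‖S‖⁻¹ ≤ bernsteinNumber T n := by
    rw [hb_def]
    obtain ⟨v, hvL, hv0⟩ := exists_mem_ne_zero_of_one_le_finrank L₀ (by omega)
    haveI : Nonempty {v : X // v ∈ L₀ ∧ v ≠ 0} := ⟨⟨v, hvL, hv0⟩⟩
    exact (hiL_lower L₀ this).trans (le_ciSup hbdd ⟨L₀, hL₀⟩)
  have hb0 : 0 < bernsteinNumber T n := lt_of_lt_of_le (inv_pos.mpr hS0) hb_lb
  -- upper bound : b ≤ (sInf G)⁻¹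
  have hb_ub : bernsteinNumber T n ≤ (sInf G)⁻¹ := by
    rw [hb_def]
    refine ciSup_le ?_
    rintro ⟨L, hL⟩
    obtain ⟨v, hvL, hv0⟩ := exists_mem_ne_zero_of_one_le_finrank L (by omega)
    haveI hneL : Nonempty {v : X // v ∈ L ∧ v ≠ 0} := ⟨⟨v, hvL, hv0⟩⟩
    have hiL0 : 0 < iL L := lt_of_lt_of_le (inv_pos.mpr hS0) (hiL_lower L hneL)
    set M : Submodule ℝ Y := L.map (e.toLinearEquiv : X →ₗ[ℝ] Y) with hM
    have hMrank : finrank ℝ M = n := by rw [hM, LinearEquiv.finrank_map_eq, hL]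
    have hMclosed : IsClosed (M : Set Y) := M.closed_of_finiteDimensional
    have hMq : finrank ℝ (Y ⧸ M) < m - n + 1 := by
      have h3 := Submodule.finrank_quotient_add_finrank M
      rw [hY, hMrank] at h3
      omega
    have hcle : sInf G ≤ ‖S.comp M.subtypeL‖ := csInf_le hG_bdd ⟨M, hMclosed, hMq, rfl⟩
    have hnormle : ‖S.comp M.subtypeL‖ ≤ (iL L)⁻¹ := by
      refine ContinuousLinearMap.opNorm_le_bound _ (inv_nonneg.mpr hiL0.le) ?_
      rintro ⟨y, hyM⟩
      by_cases hy0 : y = 0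
      · simp [hy0]
      · obtain ⟨x, hxL, hxy⟩ := Submodule.mem_map.mp hyM
        have hex : e x = y := by
          simpa using hxy
        have hTx : T x = y := by
          rw [hTdef]; exact hex
        have hx0 : x ≠ 0 := by
          rintro rfl
          apply hy0
          rw [← hTx, map_zero]
        have hkey : iL L ≤ ‖T x‖ / ‖x‖ := ciInf_le (hiL_bddBelow L) ⟨x, hxL, hx0⟩
        have hSy : S y = x := by rw [← hTx, hST]
        have hxpos : (0:ℝ) < ‖x‖ := norm_pos_iff.mpr hx0
        rw [le_div_iff₀ hxpos] at hkey
        have happ : ‖(S.comp M.subtypeL) ⟨y, hyM⟩‖ = ‖x‖ := by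
          simp [hSy]
        have hnorm_sub : ‖(⟨y, hyM⟩ : M)‖ = ‖y‖ := rfl
        rw [happ, hnorm_sub, ← hTx]
        calc ‖x‖ = (iL L)⁻¹ * (iL L * ‖x‖) := by field_simp
          _ ≤ (iL L)⁻¹ * ‖T x‖ :=
              mul_le_mul_of_nonneg_left hkey (inv_nonneg.mpr hiL0.le)
    have hprod : iL L * sInf G ≤ 1 := by
      calc iL L * sInf G ≤ iL L * ‖S.comp M.subtypeL‖ :=
            mul_le_mul_of_nonneg_left hcle (hiL_nonneg L)
        _ ≤ iL L * (iL L)⁻¹ := mul_le_mul_of_nonneg_left hnormle (hiL_nonneg L)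
        _ = 1 := mul_inv_cancel₀ hiL0.ne'
    calc iL L = (iL L * sInf G) * (sInf G)⁻¹ := by field_simp
      _ ≤ 1 * (sInf G)⁻¹ := mul_le_mul_of_nonneg_right hprod (inv_nonneg.mpr hc0.le)
      _ = (sInf G)⁻¹ := one_mul _
  -- lower bound : b⁻¹ ≤ sInf G
  have hinv : (bernsteinNumber T n)⁻¹ ≤ sInf G := by
    refine le_csInf hG_ne ?_
    rintro r ⟨M, hMcl, hq, rfl⟩
    have h3 := Submodule.finrank_quotient_add_finrank M
    rw [hY] at h3
    have hrank : n ≤ finrank ℝ M := by omega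
    have hr0 : 0 < ‖S.comp M.subtypeL‖ :=
      lt_of_lt_of_le hc0 (csInf_le hG_bdd ⟨M, hMcl, hq, rfl⟩)
    set L' : Submodule ℝ X := M.map (e.symm.toLinearEquiv : Y →ₗ[ℝ] X) with hL'
    have hL'rank : finrank ℝ L' = finrank ℝ M := by
      rw [hL']; exact LinearEquiv.finrank_map_eq _ _
    obtain ⟨L, hLle, hLrank⟩ := exists_sub_of_le_finrank L' (n := n) (by rw [hL'rank]; exact hrank)
    have hkey : ‖S.comp M.subtypeL‖⁻¹ ≤ iL L := by
      obtain ⟨v, hvL, hv0⟩ := exists_mem_ne_zero_of_one_le_finrank L (by omega)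
      haveI : Nonempty {v : X // v ∈ L ∧ v ≠ 0} := ⟨⟨v, hvL, hv0⟩⟩
      refine le_ciInf ?_
      rintro ⟨x, hxL, hx0⟩
      obtain ⟨y, hyM, hyx⟩ := Submodule.mem_map.mp (hLle hxL)
      have hyx' : e.symm y = x := by simpa using hyx
      have hSy : S y = x := by rw [hSdef]; exact hyx'
      have hTx : T x = y := by rw [← hSy, hTS]
      have hxnorm : ‖x‖ ≤ ‖S.comp M.subtypeL‖ * ‖y‖ := by
        have h := (S.comp M.subtypeL).le_opNorm ⟨y, hyM⟩
        have happ : ‖(S.comp M.subtypeL) ⟨y, hyM⟩‖ = ‖x‖ := by simp [hSy]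
        have hnorm_sub : ‖(⟨y, hyM⟩ : M)‖ = ‖y‖ := rfl
        rwa [happ, hnorm_sub] at h
      have hxpos : (0:ℝ) < ‖x‖ := norm_pos_iff.mpr hx0
      rw [le_div_iff₀ hxpos, hTx]
      calc ‖S.comp M.subtypeL‖⁻¹ * ‖x‖
          ≤ ‖S.comp M.subtypeL‖⁻¹ * (‖S.comp M.subtypeL‖ * ‖y‖) :=
            mul_le_mul_of_nonneg_left hxnorm (inv_nonneg.mpr hr0.le)
        _ = ‖y‖ := by field_simp
    have hble : ‖S.comp M.subtypeL‖⁻¹ ≤ bernsteinNumber T n := by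
      rw [hb_def]
      exact hkey.trans (le_ciSup hbdd ⟨L, hLrank⟩)
    have h1r : 1 ≤ bernsteinNumber T n * ‖S.comp M.subtypeL‖ := by
      calc 1 = ‖S.comp M.subtypeL‖⁻¹ * ‖S.comp M.subtypeL‖ :=
            (inv_mul_cancel₀ hr0.ne').symm
        _ ≤ bernsteinNumber T n * ‖S.comp M.subtypeL‖ :=
            mul_le_mul_of_nonneg_right hble hr0.le
    calc (bernsteinNumber T n)⁻¹ = (bernsteinNumber T n)⁻¹ * 1 := (mul_one _).symm
      _ ≤ (bernsteinNumber T n)⁻¹ * (bernsteinNumber T n * ‖S.comp M.subtypeL‖) :=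
          mul_le_mul_of_nonneg_left h1r (inv_nonneg.mpr hb0.le)
      _ = ‖S.comp M.subtypeL‖ := by field_simp
  -- conclude
  rw [hc_def]
  have upper : bernsteinNumber T n * sInf G ≤ 1 := by
    calc bernsteinNumber T n * sInf G ≤ (sInf G)⁻¹ * sInf G :=
          mul_le_mul_of_nonneg_right hb_ub hc0.le
      _ = 1 := inv_mul_cancel₀ hc0.ne'
  have lower : 1 ≤ bernsteinNumber T n * sInf G := by
    calc 1 = bernsteinNumber T n * (bernsteinNumber T n)⁻¹ :=
          (mul_inv_cancel₀ hb0.ne').symm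
      _ ≤ bernsteinNumber T n * sInf G := mul_le_mul_of_nonneg_left hinv hb0.le
  linarith
end
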